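/- arXiv:2604.21323 — 4 statements merged into one kernel-verified Lean document; each statement's English description precedes it below -/
import Mathlib

section
/- Let H be a finite-dimensional Hilbert space with D := dim(Herm(H)) = (dim H)², let Φ : Herm(H) → S be a linear map into a real vector space S of dimension m, and suppose Φ is positively homogeneous on the positive cone in the sense that it is linear. Let M = (M₁,...,M_s) be a POVM with s > D + m. Then there exists a POVM N = (N₁,...,N_{s'}) with s' ≤ D + m, each Nₓ a nonnegative scalar multiple of some Mₓ, such that Σₓ Φ(Nₓ) = Σₓ Φ(Mₓ). More precisely: there exists a POVM with at most D + m outcomes, each element of the form cₓMₓ with cₓ ≥ 0, having the same value of Σₓ Φ(Mₓ) and the same sum Σₓ Mₓ = I. -/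
open Matrix Module
open scoped ComplexOrder

lemma psd_smul' {n : ℕ} {M : Matrix (Fin n) (Fin n) ℂ} (hM : M.PosSemidef)
    {c : ℝ} (hc : 0 ≤ c) : (c • M).PosSemidef := by
  rw [posSemidef_iff_dotProduct_mulVec]
  constructor
  · unfold Matrix.IsHermitian
    rw [conjTranspose_smul, hM.1.eq]
    simp
  · intro x
    have h := (posSemidef_iff_dotProduct_mulVec.mp hM).2 x
    have hre : star x ⬝ᵥ (c • M) *ᵥ x = (c : ℂ) * (star x ⬝ᵥ M *ᵥ x) := by
      have hcs : (c • M) = (c : ℂ) • M := by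
        ext i j; simp [Complex.real_smul]
      rw [hcs, smul_mulVec, dotProduct_smul, smul_eq_mul]
    rw [hre]
    exact mul_nonneg (by exact_mod_cast Complex.zero_le_real.mpr hc) h

noncomputable def EE (n : ℕ) : Matrix (Fin n) (Fin n) ℂ →ₗ[ℝ] (Fin n × Fin n → ℝ) where
  toFun A p := if p.1 ≤ p.2 then (A p.1 p.2).re else (A p.1 p.2).im
  map_add' A B := by funext p; by_cases h : p.1 ≤ p.2 <;> simp [h]
  map_smul' c A := by funext p; by_cases h : p.1 ≤ p.2 <;> simp [h, Complex.real_smul]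

lemma EE_inj {n : ℕ} {A : Matrix (Fin n) (Fin n) ℂ} (hA : Aᴴ = A)
    (h0 : EE n A = 0) : A = 0 := by
  have hA' : ∀ p : Fin n × Fin n, EE n A p = 0 := fun p => congrFun h0 p
  have herm : ∀ i j, A j i = star (A i j) := by
    intro i j
    conv_lhs => rw [← hA]
    rw [Matrix.conjTranspose_apply]
  ext i j
  rcases le_or_gt i j with hij | hij
  · have hre : (A i j).re = 0 := by simpa [EE, hij] using hA' (i, j)
    have him : (A i j).im = 0 := by
      rcases eq_or_lt_of_le hij with h | h
      · subst h
        have h3 : (A i i).im = -(A i i).im := by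
          simpa using congrArg Complex.im (herm i i)
        linarith
      · have hji : ¬ (j ≤ i) := not_le.mpr h
        have h4 : (A j i).im = 0 := by simpa [EE, hji] using hA' (j, i)
        have h3 : (A j i).im = -(A i j).im := by
          simpa using congrArg Complex.im (herm i j)
        linarith
    simp [Complex.ext_iff, hre, him]
  · have hji : j ≤ i := hij.le
    have hij' : ¬ (i ≤ j) := not_le.mpr hij
    have him : (A i j).im = 0 := by simpa [EE, hij'] using hA' (i, j)
    have h4 : (A j i).re = 0 := by simpa [EE, hji] using hA' (j, i)
    have h3 : (A i j).re = (A j i).re := by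
      simpa using congrArg Complex.re (herm j i)
    simp [Complex.ext_iff, him, h3, h4]

lemma aux_reduce {n m : ℕ} {S : Type*} [AddCommGroup S] [Module ℝ S]
    [FiniteDimensional ℝ S] (hS : finrank ℝ S = m)
    (Φ : Matrix (Fin n) (Fin n) ℂ →ₗ[ℝ] S) :
    ∀ s (M : Fin s → Matrix (Fin n) (Fin n) ℂ),
      (∀ x, (M x).PosSemidef) → (∑ x, M x = 1) →
    ∃ (s' : ℕ) (N : Fin s' → Matrix (Fin n) (Fin n) ℂ)
      (f : Fin s' → Fin s) (c : Fin s' → ℝ),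
      s' ≤ n ^ 2 + m ∧
      (∀ y, 0 ≤ c y) ∧
      (∀ y, N y = c y • M (f y)) ∧
      (∀ y, (N y).PosSemidef) ∧
      (∑ y, N y = 1) ∧
      (∑ y, Φ (N y) = ∑ x, Φ (M x)) := by
  intro s
  induction s using Nat.strong_induction_on with
  | _ s IH =>
    intro M hM hMsum
    by_cases hle : s ≤ n ^ 2 + m
    · exact ⟨s, M, id, fun _ => 1, hle, fun _ => zero_le_one,
        fun y => (one_smul ℝ (M y)).symm, hM, hMsum, rfl⟩
    push_neg at hle
    obtain ⟨k, rfl⟩ : ∃ k, s = k + 1 := ⟨s - 1, by omega⟩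
    -- the dependent family
    set P := ((Fin n × Fin n → ℝ) × S)
    let w : Fin (k + 1) → P := fun x => (EE n (M x), Φ (M x))
    have hdep : ¬ LinearIndependent ℝ w := by
      intro h
      have hcard := h.fintype_card_le_finrank
      rw [Fintype.card_fin] at hcard
      have : finrank ℝ P = n ^ 2 + m := by
        rw [finrank_prod, hS]
        congr 1
        simp [sq]
      omega
    rw [Fintype.not_linearIndependent_iff] at hdep
    obtain ⟨α, hsum, i0, hi0⟩ := hdep
    -- extract components
    have h1 : ∑ x, α x • EE n (M x) = 0 := by
      have := congrArg Prod.fst hsum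
      rw [Prod.fst_sum] at this
      exact this
    have h2 : ∑ x, α x • Φ (M x) = 0 := by
      have := congrArg Prod.snd hsum
      rw [Prod.snd_sum] at this
      exact this
    have hΦ0 : Φ (∑ x, α x • M x) = 0 := by
      rw [map_sum]
      simp_rw [_root_.map_smul]
      exact h2
    have hM0 : ∑ x, α x • M x = 0 := by
      apply EE_inj (A := ∑ x, α x • M x)
      · rw [conjTranspose_sum]
        apply Finset.sum_congr rfl
        intro x _
        rw [conjTranspose_smul, (hM x).1.eq]
        simp
      · rw [map_sum]
        simp_rw [_root_.map_smul]
        exact h1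
    -- choose sign so that some entry is positive
    have hγ : ∃ γ : Fin (k + 1) → ℝ, (∑ x, γ x • M x = 0) ∧
        (∑ x, γ x • Φ (M x) = 0) ∧ ∃ i, 0 < γ i := by
      rcases lt_or_gt_of_ne hi0 with hneg | hpos
      · refine ⟨-α, ?_, ?_, i0, by simpa using hneg⟩
        · simp only [Pi.neg_apply, neg_smul, Finset.sum_neg_distrib, hM0, neg_zero]
        · simp only [Pi.neg_apply, neg_smul, Finset.sum_neg_distrib, h2, neg_zero]
      · exact ⟨α, hM0, h2, i0, hpos⟩
    obtain ⟨γ, hγM, hγΦ, i1, hi1⟩ := hγ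
    -- pick the maximizer
    obtain ⟨x₀, -, hmax⟩ := Finset.exists_max_image Finset.univ γ ⟨i1, Finset.mem_univ i1⟩
    have hx₀pos : 0 < γ x₀ := lt_of_lt_of_le hi1 (hmax i1 (Finset.mem_univ i1))
    set t : ℝ := (γ x₀)⁻¹ with ht
    have htpos : 0 < t := inv_pos.mpr hx₀pos
    set c : Fin (k + 1) → ℝ := fun x => 1 - t * γ x with hc
    have hcnn : ∀ x, 0 ≤ c x := by
      intro x
      have : t * γ x ≤ t * γ x₀ := by
        exact mul_le_mul_of_nonneg_left (hmax x (Finset.mem_univ x)) htpos.le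
      have h1 : t * γ x₀ = 1 := inv_mul_cancel₀ (ne_of_gt hx₀pos)
      simp only [hc]
      linarith
    have hcx₀ : c x₀ = 0 := by
      simp only [hc, ht]
      rw [inv_mul_cancel₀ (ne_of_gt hx₀pos)]
      ring
    -- key sums
    have hcM : ∑ x, c x • M x = 1 := by
      have : ∑ x, c x • M x = ∑ x, M x - t • ∑ x, γ x • M x := by
        rw [Finset.smul_sum, ← Finset.sum_sub_distrib]
        apply Finset.sum_congr rfl
        intro x _
        rw [smul_smul]
        simp only [hc]
        rw [sub_smul, one_smul]
      rw [this, hγM, hMsum, smul_zero, sub_zero]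
    have hcΦ : ∑ x, c x • Φ (M x) = ∑ x, Φ (M x) := by
      have : ∑ x, c x • Φ (M x) = ∑ x, Φ (M x) - t • ∑ x, γ x • Φ (M x) := by
        rw [Finset.smul_sum, ← Finset.sum_sub_distrib]
        apply Finset.sum_congr rfl
        intro x _
        rw [smul_smul]
        simp only [hc]
        rw [sub_smul, one_smul]
      rw [this, hγΦ, smul_zero, sub_zero]
    -- the reduced family
    set M' : Fin k → Matrix (Fin n) (Fin n) ℂ :=
      fun y => c (x₀.succAbove y) • M (x₀.succAbove y) with hM'def
    have hM'psd : ∀ y, (M' y).PosSemidef := fun y =>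
      psd_smul' (hM _) (hcnn _)
    have hM'sum : ∑ y, M' y = 1 := by
      have hs : ∑ x, c x • M x = c x₀ • M x₀ + ∑ y, M' y :=
        Fin.sum_univ_succAbove (fun x => c x • M x) x₀
      rw [hcx₀, zero_smul, zero_add] at hs
      rw [← hs, hcM]
    have hM'Φ : ∑ y, Φ (M' y) = ∑ x, Φ (M x) := by
      have hs : ∑ x, Φ (c x • M x) = Φ (c x₀ • M x₀) + ∑ y, Φ (M' y) :=
        Fin.sum_univ_succAbove (fun x => Φ (c x • M x)) x₀
      rw [hcx₀, zero_smul, map_zero, zero_add] at hs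
      rw [← hs]
      simp_rw [_root_.map_smul]
      exact hcΦ
    obtain ⟨s', N, f', c', hle', hc'nn, hN', hPSD', hNsum', hΦ'⟩ :=
      IH k (by omega) M' hM'psd hM'sum
    refine ⟨s', N, fun y => x₀.succAbove (f' y),
      fun y => c' y * c (x₀.succAbove (f' y)), hle', ?_, ?_, hPSD', hNsum', ?_⟩
    · intro y; exact mul_nonneg (hc'nn y) (hcnn _)
    · intro y
      rw [hN' y]
      simp only [hM'def]
      rw [smul_smul]
    · rw [hΦ', hM'Φ]


/-- Carathéodory-type reduction for POVMs: if Φ is a real-linear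
map into an m-dimensional real vector space S, and M is a POVM with more than
D + m outcomes (D = (dim H)² the dimension of the Hermitian operators), then
there is a POVM with at most D + m outcomes, each element a nonnegative multiple
of an element of M, with the same sum Σ Φ(Mₓ) (and of course the same sum I). -/
theorem stmt_10 {n m s : ℕ} {S : Type*} [AddCommGroup S] [Module ℝ S]
    [FiniteDimensional ℝ S] (hS : finrank ℝ S = m)
    (Φ : Matrix (Fin n) (Fin n) ℂ →ₗ[ℝ] S)
    (M : Fin s → Matrix (Fin n) (Fin n) ℂ)
    (hM : ∀ x, (M x).PosSemidef) (hMsum : ∑ x, M x = 1)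
    (hs : s > n ^ 2 + m) :
    ∃ (s' : ℕ) (N : Fin s' → Matrix (Fin n) (Fin n) ℂ)
      (f : Fin s' → Fin s) (c : Fin s' → ℝ),
      s' ≤ n ^ 2 + m ∧
      (∀ y, 0 ≤ c y) ∧
      (∀ y, N y = c y • M (f y)) ∧
      (∀ y, (N y).PosSemidef) ∧
      (∑ y, N y = 1) ∧
      (∑ y, Φ (N y) = ∑ x, Φ (M x)) :=
  aux_reduce hS Φ s M hM hMsum
end

section
/- Fix a density operator ρ and Hermitian operators D₁,...,D_d on a finite-dimensional Hilbert space H with n := dim H. For every POVM M with s outcomes there exists a POVM N with at most n² + d(d+1)/2 outcomes, each element of N being a nonnegative multiple of an element of M, such that F[N] = F[M], where F is the classical Fisher information matrix F[M] = Σₓ g[Mₓ] with g[Z]ᵢⱼ = tr(DᵢZ)tr(DⱼZ)/tr(ρZ) (and 0 when tr(ρZ)=0). -/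
open Matrix
open scoped ComplexOrder

/-- The matrix g[X] with entries tr(DᵢX)tr(DⱼX)/tr(ρX), defined as 0 when tr(ρX)=0. -/
noncomputable def gMat {n d : ℕ} (ρ : Matrix (Fin n) (Fin n) ℂ)
    (D : Fin d → Matrix (Fin n) (Fin n) ℂ) (X : Matrix (Fin n) (Fin n) ℂ) :
    Matrix (Fin d) (Fin d) ℝ :=
  if ((ρ * X).trace).re = 0 then 0
  else Matrix.of fun i j => ((D i * X).trace.re * (D j * X).trace.re) / ((ρ * X).trace).re

/-- The classical Fisher information matrix F[M] = Σₓ g[Mₓ] of a POVM M. -/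
noncomputable def Fmat {n d s : ℕ} (ρ : Matrix (Fin n) (Fin n) ℂ)
    (D : Fin d → Matrix (Fin n) (Fin n) ℂ) (M : Fin s → Matrix (Fin n) (Fin n) ℂ) :
    Matrix (Fin d) (Fin d) ℝ :=
  ∑ x, gMat ρ D (M x)

lemma real_smul_mat {n : ℕ} (t : ℝ) (X : Matrix (Fin n) (Fin n) ℂ) :
    t • X = (t : ℂ) • X := by
  ext i j; simp [Complex.real_smul]

lemma gMat_smul {n d : ℕ} (ρ : Matrix (Fin n) (Fin n) ℂ)
    (D : Fin d → Matrix (Fin n) (Fin n) ℂ) (t : ℝ) (X : Matrix (Fin n) (Fin n) ℂ) :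
    gMat ρ D (t • X) = t • gMat ρ D X := by
  have htr : ∀ A : Matrix (Fin n) (Fin n) ℂ,
      ((A * (t • X)).trace).re = t * ((A * X).trace).re := by
    intro A
    rw [real_smul_mat, mul_smul_comm, trace_smul]
    simp [Complex.mul_re]
  unfold gMat
  by_cases ht : t = 0
  · subst ht
    simp [htr]
  by_cases hb : ((ρ * X).trace).re = 0
  · rw [if_pos hb, if_pos (by rw [htr, hb, mul_zero]), smul_zero]
  · rw [if_neg hb, if_neg (by rw [htr]; exact mul_ne_zero ht hb)]
    ext i j
    simp only [Matrix.smul_apply, Matrix.of_apply, htr, smul_eq_mul]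
    field_simp

lemma gMat_symm {n d : ℕ} (ρ : Matrix (Fin n) (Fin n) ℂ)
    (D : Fin d → Matrix (Fin n) (Fin n) ℂ) (X : Matrix (Fin n) (Fin n) ℂ) (i j : Fin d) :
    gMat ρ D X i j = gMat ρ D X j i := by
  unfold gMat
  split_ifs with h
  · rfl
  · simp only [Matrix.of_apply]; ring

lemma posSemidef_real_smul {n : ℕ} {X : Matrix (Fin n) (Fin n) ℂ} (hX : X.PosSemidef)
    {t : ℝ} (ht : 0 ≤ t) : (t • X).PosSemidef := by
  rw [real_smul_mat]
  constructor
  · show ((t:ℂ) • X)ᴴ = (t:ℂ) • X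
    rw [conjTranspose_smul, hX.1]
    congr 1
    simp
  · intro x
    exact (hX.smul (Complex.zero_le_real.mpr ht)).2 x

lemma card_sigma_fin (d : ℕ) :
    Fintype.card (Σ i : Fin d, Fin (i.val + 1)) = d * (d + 1) / 2 := by
  rw [Fintype.card_sigma]
  simp only [Fintype.card_fin]
  rw [Fin.sum_univ_eq_sum_range (fun i => i + 1) d]
  have h := Finset.sum_range_id_mul_two (d + 1)
  rw [Finset.sum_range_succ'] at h
  simp only [add_zero, Nat.add_sub_cancel] at h
  set S := ∑ i ∈ Finset.range d, (i + 1) with hS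
  have h2 : S * 2 = d * (d + 1) := by rw [h]; ring
  omega

theorem key_reduction {n d : ℕ} (ρ : Matrix (Fin n) (Fin n) ℂ)
    (D : Fin d → Matrix (Fin n) (Fin n) ℂ) :
    ∀ s : ℕ, ∀ M : Fin s → Matrix (Fin n) (Fin n) ℂ,
    (∀ x, (M x).PosSemidef) → (∑ x, M x = 1) →
    ∃ (s' : ℕ) (N : Fin s' → Matrix (Fin n) (Fin n) ℂ)
      (f : Fin s' → Fin s) (c : Fin s' → ℝ),
      s' ≤ n ^ 2 + d * (d + 1) / 2 ∧
      (∀ y, 0 ≤ c y) ∧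
      (∀ y, N y = c y • M (f y)) ∧
      (∀ y, (N y).PosSemidef) ∧
      (∑ y, N y = 1) ∧
      Fmat ρ D N = Fmat ρ D M := by
  intro s
  induction s using Nat.strong_induction_on with
  | _ s ih =>
  intro M hM hMsum
  by_cases hs : s ≤ n ^ 2 + d * (d + 1) / 2
  · exact ⟨s, M, id, fun _ => 1, hs, fun _ => zero_le_one,
      fun y => (one_smul ℝ (M y)).symm, hM, hMsum, rfl⟩
  obtain ⟨m, rfl⟩ : ∃ m, s = m + 1 := ⟨s - 1, by omega⟩
  have hherm : ∀ x, (M x).IsHermitian := fun x => (hM x).1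
  -- the vectors (Mₓ, g[Mₓ]) packed into a real vector space of dim n² + d(d+1)/2
  set v : Fin (m + 1) → ((Fin n × Fin n) → ℝ) × ((Σ i : Fin d, Fin (i.val + 1)) → ℝ) :=
    fun x =>
      (fun p => if p.1 ≤ p.2 then ((M x) p.1 p.2).re else ((M x) p.1 p.2).im,
       fun q => gMat ρ D (M x) q.1 (Fin.castLE q.1.isLt q.2)) with hv
  have hdep : ¬ LinearIndependent ℝ v := by
    intro h
    have hle := h.fintype_card_le_finrank
    rw [Fintype.card_fin, Module.finrank_prod, Module.finrank_fintype_fun_eq_card,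
      Module.finrank_fintype_fun_eq_card, Fintype.card_prod, Fintype.card_fin,
      card_sigma_fin] at hle
    have : n * n = n ^ 2 := (sq n).symm
    omega
  obtain ⟨c0, hc0, x₁, hx₁⟩ := Fintype.not_linearIndependent_iff.mp hdep
  obtain ⟨c, hc, x₁, hx₁⟩ : ∃ c : Fin (m + 1) → ℝ,
      (∑ x, c x • v x = 0) ∧ ∃ x, 0 < c x := by
    rcases hx₁.lt_or_gt with hneg | hpos
    · refine ⟨-c0, ?_, x₁, by simpa using hneg⟩
      simp only [Pi.neg_apply, neg_smul, Finset.sum_neg_distrib, hc0, neg_zero]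
    · exact ⟨c0, hc0, x₁, hpos⟩
  have h1 : ∀ p : Fin n × Fin n, ∑ x, c x * ((v x).1 p) = 0 := by
    intro p
    have := congrFun (congrArg Prod.fst hc) p
    simpa [Prod.fst_sum, Finset.sum_apply, Pi.smul_apply, smul_eq_mul] using this
  have h2 : ∀ q : (Σ i : Fin d, Fin (i.val + 1)),
      ∑ x, c x * gMat ρ D (M x) q.1 (Fin.castLE q.1.isLt q.2) = 0 := by
    intro q
    have := congrFun (congrArg Prod.snd hc) q
    simpa [Prod.snd_sum, Finset.sum_apply, Pi.smul_apply, smul_eq_mul, hv] using this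
  have hre : ∀ k l : Fin n, k ≤ l → ∑ x, c x * ((M x) k l).re = 0 := by
    intro k l hkl
    have := h1 (k, l)
    simpa [hv, hkl] using this
  have him : ∀ k l : Fin n, ¬ k ≤ l → ∑ x, c x * ((M x) k l).im = 0 := by
    intro k l hkl
    have := h1 (k, l)
    simpa [hv, hkl] using this
  have key1 : ∑ x, c x • M x = (0 : Matrix (Fin n) (Fin n) ℂ) := by
    ext i j
    rw [Matrix.sum_apply]
    simp only [Matrix.smul_apply]
    have hrw : ∀ x : Fin (m+1), c x • (M x) i j = (↑(c x) : ℂ) * (M x) i j := by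
      intro x; rw [Complex.real_smul]
    rw [Finset.sum_congr rfl fun x _ => hrw x]
    apply Complex.ext
    · rw [Complex.re_sum]
      simp only [Complex.mul_re, Complex.ofReal_re, Complex.ofReal_im, zero_mul, sub_zero]
      rcases le_or_gt i j with h | h
      · simpa using hre i j h
      · have heq : ∀ x : Fin (m+1), ((M x) i j).re = ((M x) j i).re := by
          intro x
          conv_lhs => rw [← (hherm x).apply i j]
          exact Complex.conj_re _
        rw [Finset.sum_congr rfl fun x _ => by rw [heq x]]
        simpa using hre j i h.le
    · rw [Complex.im_sum]
      simp only [Complex.mul_im, Complex.ofReal_re, Complex.ofReal_im, zero_mul, add_zero]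
      have hdiag : ∀ (x : Fin (m+1)) (k : Fin n), ((M x) k k).im = 0 := by
        intro x k
        have h2 := congrArg Complex.im ((hherm x).apply k k)
        rw [Complex.star_def, Complex.conj_im] at h2
        linarith
      rcases le_or_gt j i with h | h
      · rcases eq_or_lt_of_le h with heq | h'
        · subst heq
          simp [hdiag]
        · simpa using him i j (not_le.mpr h')
      · have heq : ∀ x : Fin (m+1), ((M x) i j).im = -((M x) j i).im := by
          intro x
          conv_lhs => rw [← (hherm x).apply i j]
          exact Complex.conj_im _
        rw [Finset.sum_congr rfl fun x _ => by rw [heq x]]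
        have := him j i (not_le.mpr h)
        simp only [mul_neg, Finset.sum_neg_distrib]
        simpa using this
  have key2 : ∑ x, c x • gMat ρ D (M x) = (0 : Matrix (Fin d) (Fin d) ℝ) := by
    ext i j
    rw [Matrix.sum_apply]
    simp only [Matrix.smul_apply, smul_eq_mul, Matrix.zero_apply]
    have hle : ∀ k l : Fin d, l ≤ k → ∑ x, c x * gMat ρ D (M x) k l = 0 := by
      intro k l hlk
      have hq := h2 ⟨k, ⟨l.val, by omega⟩⟩
      have hcast : Fin.castLE k.isLt (⟨l.val, by omega⟩ : Fin (k.val + 1)) = l := rfl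
      rwa [hcast] at hq
    rcases le_or_gt j i with h | h
    · exact hle i j h
    · rw [Finset.sum_congr rfl fun x _ => by rw [gMat_symm ρ D (M x) i j]]
      exact hle j i h.le
  obtain ⟨x₀, hx₀⟩ := Finite.exists_max c
  have hcx₀ : 0 < c x₀ := lt_of_lt_of_le hx₁ (hx₀ x₁)
  set w : Fin (m + 1) → ℝ := fun x => 1 - (1 / c x₀) * c x with hw
  have hw0 : w x₀ = 0 := by
    simp only [hw]
    field_simp
    ring
  have hwnn : ∀ x, 0 ≤ w x := by
    intro x
    simp only [hw]
    rcases le_or_gt (c x) 0 with h | h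
    · have ht : 0 ≤ 1 / c x₀ := le_of_lt (one_div_pos.mpr hcx₀)
      nlinarith
    · have h1 : c x / c x₀ ≤ 1 := (div_le_one hcx₀).mpr (hx₀ x)
      have h2 : (1 / c x₀) * c x = c x / c x₀ := by ring
      linarith [h2 ▸ h1]
  set M' : Fin (m + 1) → Matrix (Fin n) (Fin n) ℂ := fun x => w x • M x with hM'
  have hM'psd : ∀ x, (M' x).PosSemidef := fun x => posSemidef_real_smul (hM x) (hwnn x)
  have hM'sum : ∑ x, M' x = 1 := by
    have hstep : ∀ x : Fin (m+1), M' x = M x - (1 / c x₀) • (c x • M x) := by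
      intro x
      simp only [hM', hw]
      rw [sub_smul, one_smul, smul_smul]
    rw [Finset.sum_congr rfl fun x _ => hstep x, Finset.sum_sub_distrib,
      ← Finset.smul_sum, key1, smul_zero, sub_zero, hMsum]
  have hM'g : ∑ x, gMat ρ D (M' x) = ∑ x, gMat ρ D (M x) := by
    have hstep : ∀ x : Fin (m+1),
        gMat ρ D (M' x) = gMat ρ D (M x) - (1 / c x₀) • (c x • gMat ρ D (M x)) := by
      intro x
      simp only [hM', hw]
      rw [gMat_smul, sub_smul, one_smul, smul_smul]
    rw [Finset.sum_congr rfl fun x _ => hstep x, Finset.sum_sub_distrib,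
      ← Finset.smul_sum, key2, smul_zero, sub_zero]
  have hM'x₀ : M' x₀ = 0 := by simp only [hM', hw0, zero_smul]
  set M'' : Fin m → Matrix (Fin n) (Fin n) ℂ := fun y => M' (x₀.succAbove y) with hM''
  have hM''psd : ∀ y, (M'' y).PosSemidef := fun y => hM'psd _
  have hM''sum : ∑ y, M'' y = 1 := by
    have h := Fin.sum_univ_succAbove M' x₀
    rw [hM'sum, hM'x₀, zero_add] at h
    exact h.symm
  have hg'' : ∑ y, gMat ρ D (M'' y) = ∑ x, gMat ρ D (M x) := by
    have h := Fin.sum_univ_succAbove (fun x => gMat ρ D (M' x)) x₀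
    have hz : gMat ρ D (M' x₀) = 0 := by
      rw [hM'x₀]
      have : (0 : Matrix (Fin n) (Fin n) ℂ) = (0:ℝ) • (0 : Matrix (Fin n) (Fin n) ℂ) := by
        rw [zero_smul]
      rw [this, gMat_smul, zero_smul]
    rw [hz, zero_add] at h
    rw [← h, hM'g]
  obtain ⟨s', N, f', c', hbnd, hcnn, hNdef, hNpsd, hNsum, hNF⟩ :=
    ih m (by omega) M'' hM''psd hM''sum
  refine ⟨s', N, fun y => x₀.succAbove (f' y),
    fun y => c' y * w (x₀.succAbove (f' y)), hbnd,
    fun y => mul_nonneg (hcnn y) (hwnn _), ?_, hNpsd, hNsum, ?_⟩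
  · intro y
    rw [hNdef y]
    simp only [hM'', hM']
    rw [smul_smul]
  · rw [hNF]
    show ∑ y, gMat ρ D (M'' y) = ∑ x, gMat ρ D (M x)
    exact hg''


/-- for every POVM M there is a POVM N with at most
n² + d(d+1)/2 outcomes, each element a nonnegative multiple of an element of M,
such that F[N] = F[M]. -/
theorem stmt_11 {n d s : ℕ} (ρ : Matrix (Fin n) (Fin n) ℂ)
    (D : Fin d → Matrix (Fin n) (Fin n) ℂ)
    (hρ : ρ.PosSemidef) (hρtr : ρ.trace = 1)
    (hD : ∀ i, (D i).IsHermitian)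
    (hdeg : ∀ Z : Matrix (Fin n) (Fin n) ℂ, Z.PosSemidef → ((ρ * Z).trace).re = 0 →
      ∀ i, ((D i * Z).trace).re = 0)
    (M : Fin s → Matrix (Fin n) (Fin n) ℂ)
    (hM : ∀ x, (M x).PosSemidef) (hMsum : ∑ x, M x = 1) :
    ∃ (s' : ℕ) (N : Fin s' → Matrix (Fin n) (Fin n) ℂ)
      (f : Fin s' → Fin s) (c : Fin s' → ℝ),
      s' ≤ n ^ 2 + d * (d + 1) / 2 ∧
      (∀ y, 0 ≤ c y) ∧
      (∀ y, N y = c y • M (f y)) ∧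
      (∀ y, (N y).PosSemidef) ∧
      (∑ y, N y = 1) ∧
      Fmat ρ D N = Fmat ρ D M := by
  exact key_reduction ρ D s M hM hMsum
end

section
/- Let ρ be a density operator, D₁,...,D_d Hermitian operators, and M a POVM such that F[M] is positive definite. Define the estimator θ̂ⁱ(x) = θ₀ⁱ + Σⱼ (F[M]⁻¹)ⁱʲ · tr(DⱼMₓ)/tr(ρMₓ) for outcomes x with tr(ρMₓ) > 0 (and θ̂(x) = θ₀ otherwise). Then (M, θ̂) is locally unbiased, i.e., Σₓ θ̂ⁱ(x)·tr(ρMₓ) = θ₀ⁱ and Σₓ θ̂ⁱ(x)·tr(DⱼMₓ) = δⁱⱼ for all i,j, and its MSE matrix V[M,θ̂]ⁱʲ = Σₓ(θ̂ⁱ(x)−θ₀ⁱ)(θ̂ʲ(x)−θ₀ʲ)tr(ρMₓ) equals F[M]⁻¹, achieving equality in the classical Cramér–Rao bound. -/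
open Matrix
open scoped ComplexOrder

/-- the canonical estimator
θ̂ⁱ(x) = θ₀ⁱ + Σⱼ (F[M]⁻¹)ⁱʲ tr(DⱼMₓ)/tr(ρMₓ) is locally unbiased and its MSE
matrix equals F[M]⁻¹, achieving equality in the classical Cramér–Rao bound. -/
theorem stmt_12 {n d s : ℕ} (ρ : Matrix (Fin n) (Fin n) ℂ)
    (D : Fin d → Matrix (Fin n) (Fin n) ℂ) (θ0 : Fin d → ℝ)
    (hρ : ρ.PosSemidef) (hρtr : ρ.trace = 1)
    (hD : ∀ i, (D i).IsHermitian) (hDtr : ∀ i, (D i).trace = 0)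
    (hdeg : ∀ Z : Matrix (Fin n) (Fin n) ℂ, Z.PosSemidef → ((ρ * Z).trace).re = 0 →
      ∀ i, ((D i * Z).trace).re = 0)
    (M : Fin s → Matrix (Fin n) (Fin n) ℂ)
    (hM : ∀ x, (M x).PosSemidef) (hMsum : ∑ x, M x = 1)
    (hF : IsUnit (Fmat ρ D M).det)
    (θhat : Fin s → Fin d → ℝ)
    (hθhat : ∀ x, θhat x =
      if ((ρ * M x).trace).re = 0 then θ0
      else fun i => θ0 i +
        ∑ j, (Fmat ρ D M)⁻¹ i j * (((D j * M x).trace).re / ((ρ * M x).trace).re)) :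
    (∀ i, ∑ x, θhat x i * ((ρ * M x).trace).re = θ0 i) ∧
    (∀ i j, ∑ x, θhat x i * ((D j * M x).trace).re = if i = j then 1 else 0) ∧
    (Matrix.of fun i j =>
        ∑ x, (θhat x i - θ0 i) * (θhat x j - θ0 j) * ((ρ * M x).trace).re)
      = (Fmat ρ D M)⁻¹ := by
  classical
  set p : Fin s → ℝ := fun x => ((ρ * M x).trace).re with hp
  set a : Fin d → Fin s → ℝ := fun j x => ((D j * M x).trace).re with ha
  set F := Fmat ρ D M with hFdef
  have hzero : ∀ x i, p x = 0 → a i x = 0 := fun x i h => hdeg (M x) (hM x) h i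
  have hFij : ∀ i j, F i j = ∑ x, (if p x = 0 then 0 else a i x * a j x / p x) := by
    intro i j
    simp [hFdef, Fmat, Matrix.sum_apply, gMat,
      apply_ite (fun m : Matrix (Fin d) (Fin d) ℝ => m i j), hp, ha]
  have hps : ∑ x, p x = 1 := by
    have h1 : ∑ x, (ρ * M x).trace = 1 := by
      rw [← Matrix.trace_sum, ← Finset.mul_sum, hMsum, mul_one, hρtr]
    have := congrArg Complex.re h1
    simpa [Complex.re_sum] using this
  have has : ∀ j, ∑ x, a j x = 0 := by
    intro j
    have h1 : ∑ x, (D j * M x).trace = 0 := by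
      rw [← Matrix.trace_sum, ← Finset.mul_sum, hMsum, mul_one, hDtr]
    have := congrArg Complex.re h1
    simpa [Complex.re_sum] using this
  have hFsymm : Fᵀ = F := by
    ext i j
    simp only [Matrix.transpose_apply, hFij]
    exact Finset.sum_congr rfl fun x _ => by split <;> ring
  have hinv_symm : (F⁻¹)ᵀ = F⁻¹ := by
    rw [Matrix.transpose_nonsing_inv, hFsymm]
  have hinvmul : F⁻¹ * F = 1 := Matrix.nonsing_inv_mul F hF
  have hmulinv : F * F⁻¹ = 1 := Matrix.mul_nonsing_inv F hF
  refine ⟨?_, ?_, ?_⟩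
  · intro i
    have hterm : ∀ x, θhat x i * p x = θ0 i * p x + ∑ j, F⁻¹ i j * a j x := by
      intro x
      rw [hθhat x]
      by_cases h : p x = 0
      · simp [h, hzero x _ h]
      · simp only [show (ρ * M x).trace.re = p x from rfl,
          show ∀ j, (D j * M x).trace.re = a j x from fun _ => rfl, h, if_false]
        rw [add_mul, Finset.sum_mul]
        congr 1
        exact Finset.sum_congr rfl fun j _ => by field_simp
    calc ∑ x, θhat x i * p x = ∑ x, (θ0 i * p x + ∑ j, F⁻¹ i j * a j x) :=
          Finset.sum_congr rfl fun x _ => hterm x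
      _ = θ0 i * (∑ x, p x) + ∑ j, F⁻¹ i j * (∑ x, a j x) := by
          rw [Finset.sum_add_distrib, ← Finset.mul_sum, Finset.sum_comm]
          simp [Finset.mul_sum]
      _ = θ0 i := by simp [hps, has]
  · intro i j
    have hterm : ∀ x, θhat x i * a j x =
        θ0 i * a j x + ∑ k, F⁻¹ i k * (if p x = 0 then 0 else a k x * a j x / p x) := by
      intro x
      rw [hθhat x]
      by_cases h : p x = 0
      · simp [h, hzero x j h]
      · simp only [show (ρ * M x).trace.re = p x from rfl,
          show ∀ j, (D j * M x).trace.re = a j x from fun _ => rfl, h, if_false]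
        rw [add_mul, Finset.sum_mul]
        congr 1
        exact Finset.sum_congr rfl fun k _ => by field_simp
    calc ∑ x, θhat x i * a j x
        = ∑ x, (θ0 i * a j x + ∑ k, F⁻¹ i k * (if p x = 0 then 0 else a k x * a j x / p x)) :=
          Finset.sum_congr rfl fun x _ => hterm x
      _ = θ0 i * (∑ x, a j x) + ∑ k, F⁻¹ i k * F k j := by
          rw [Finset.sum_add_distrib, ← Finset.mul_sum, Finset.sum_comm]
          simp [Finset.mul_sum, hFij]
      _ = (F⁻¹ * F) i j := by simp [has, Matrix.mul_apply]
      _ = if i = j then 1 else 0 := by rw [hinvmul]; simp [Matrix.one_apply]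
  · ext i j
    have hterm : ∀ x, (θhat x i - θ0 i) * (θhat x j - θ0 j) * p x =
        ∑ k, ∑ l, F⁻¹ i k * F⁻¹ j l * (if p x = 0 then 0 else a k x * a l x / p x) := by
      intro x
      rw [hθhat x]
      by_cases h : p x = 0
      · simp [h]
      · simp only [show (ρ * M x).trace.re = p x from rfl,
          show ∀ j, (D j * M x).trace.re = a j x from fun _ => rfl, h, if_false, add_sub_cancel_left]
        rw [Finset.sum_mul_sum, Finset.sum_mul]
        refine Finset.sum_congr rfl fun k _ => ?_
        rw [Finset.sum_mul]
        exact Finset.sum_congr rfl fun l _ => by field_simp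
    have : ∑ x, (θhat x i - θ0 i) * (θhat x j - θ0 j) * p x
        = ∑ k, ∑ l, F⁻¹ i k * F⁻¹ j l * F k l := by
      rw [Finset.sum_congr rfl fun x _ => hterm x, Finset.sum_comm]
      refine Finset.sum_congr rfl fun k _ => ?_
      rw [Finset.sum_comm]
      refine Finset.sum_congr rfl fun l _ => ?_
      rw [← Finset.mul_sum, hFij]
    have hsym : ∀ l, F⁻¹ j l = F⁻¹ l j := fun l => by
      conv_lhs => rw [← hinv_symm]
      exact Matrix.transpose_apply _ _ _
    simp only [Matrix.of_apply, show ∀ x, (ρ * M x).trace.re = p x from fun _ => rfl, this]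
    calc ∑ k, ∑ l, F⁻¹ i k * F⁻¹ j l * F k l
        = ∑ k, F⁻¹ i k * ((F * F⁻¹) k j) := by
          refine Finset.sum_congr rfl fun k _ => ?_
          rw [Matrix.mul_apply, Finset.mul_sum]
          exact Finset.sum_congr rfl fun l _ => by rw [hsym l]; ring
      _ = F⁻¹ i j := by rw [hmulinv]; simp [Matrix.one_apply]
end

section
/- Let M = (M₁,...,M_s) be a POVM on a finite-dimensional Hilbert space and suppose each Mₓ decomposes as Mₓ = Σ_k N_{x,k} with each N_{x,k} ≥ 0. Then N := (N_{x,k})_{x,k} is a POVM, and F[N] ≥ F[M] in the Loewner order, where F is the classical Fisher information matrix F[M] = Σₓ g[Mₓ] with g as above. -/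
open Matrix
open scoped ComplexOrder

/-- Real part of trace of a product of two PSD matrices is nonnegative. -/
lemma trace_mul_psd_re_nonneg {n : ℕ} {ρ Y : Matrix (Fin n) (Fin n) ℂ}
    (hρ : ρ.PosSemidef) (hY : Y.PosSemidef) : 0 ≤ ((ρ * Y).trace).re := by
  obtain ⟨B, hB⟩ : ∃ B : Matrix (Fin n) (Fin n) ℂ, Y = Bᴴ * B := by
    open scoped MatrixOrder in
    exact CStarAlgebra.nonneg_iff_eq_star_mul_self.mp hY.nonneg
  have h1 : (ρ * Y).trace = (B * ρ * Bᴴ).trace := by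
    rw [hB, ← Matrix.mul_assoc, Matrix.trace_mul_cycle]
  have h2 : (B * ρ * Bᴴ).PosSemidef := hρ.mul_mul_conjTranspose_same B
  rw [h1, Matrix.trace]
  rw [Complex.re_sum]
  apply Finset.sum_nonneg
  intro i _
  have := h2.re_dotProduct_nonneg (Pi.single i 1)
  simpa [dotProduct, Matrix.mulVec, Pi.single_apply, Finset.sum_ite_eq,
    Matrix.diag] using this

/-- gMat is symmetric (Hermitian over ℝ). -/
lemma gMat_isHermitian {n d : ℕ} (ρ : Matrix (Fin n) (Fin n) ℂ)
    (D : Fin d → Matrix (Fin n) (Fin n) ℂ) (X : Matrix (Fin n) (Fin n) ℂ) :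
    (gMat ρ D X).IsHermitian := by
  unfold gMat
  split
  · exact Matrix.isHermitian_zero
  · ext i j
    simp [Matrix.conjTranspose_apply, mul_comm]

lemma sum_mulVec' {d : ℕ} {ι : Type*} (s : Finset ι) (A : ι → Matrix (Fin d) (Fin d) ℝ)
    (v : Fin d → ℝ) : (∑ j ∈ s, A j) *ᵥ v = ∑ j ∈ s, A j *ᵥ v := by
  ext i
  simp only [Matrix.mulVec, dotProduct, Matrix.sum_apply, Finset.sum_apply, Finset.sum_mul]
  rw [Finset.sum_comm]

lemma dotProduct_sum' {d : ℕ} {ι : Type*} (s : Finset ι) (v : Fin d → ℝ)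
    (w : ι → Fin d → ℝ) : v ⬝ᵥ (∑ j ∈ s, w j) = ∑ j ∈ s, v ⬝ᵥ w j := by
  simp only [dotProduct, Finset.sum_apply, Finset.mul_sum]
  exact Finset.sum_comm

lemma isHermitian_finsum {d : ℕ} {ι : Type*} (s : Finset ι)
    (A : ι → Matrix (Fin d) (Fin d) ℝ) (h : ∀ j ∈ s, (A j).IsHermitian) :
    (∑ j ∈ s, A j).IsHermitian := by
  unfold Matrix.IsHermitian
  rw [Matrix.conjTranspose_sum]
  exact Finset.sum_congr rfl h

/-- Quadratic form of gMat. -/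
lemma gMat_quad {n d : ℕ} (ρ : Matrix (Fin n) (Fin n) ℂ)
    (D : Fin d → Matrix (Fin n) (Fin n) ℂ) (X : Matrix (Fin n) (Fin n) ℂ)
    (v : Fin d → ℝ) :
    v ⬝ᵥ (gMat ρ D X) *ᵥ v =
      if ((ρ * X).trace).re = 0 then 0
      else (∑ i, v i * ((D i * X).trace).re) ^ 2 / ((ρ * X).trace).re := by
  unfold gMat
  split
  · simp
  · rw [sq, Finset.sum_mul_sum, Finset.sum_div]
    simp only [dotProduct, Matrix.mulVec, Matrix.of_apply, Finset.mul_sum,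
      Finset.sum_div]
    refine Finset.sum_congr rfl fun i _ => Finset.sum_congr rfl fun j _ => ?_
    ring

/-- refining a POVM by decomposing each element Mₓ = Σ_k N_{x,k}
into positive semidefinite parts yields a POVM (N_{x,k}) whose classical Fisher
information matrix dominates that of M in the Loewner order. -/
theorem stmt_18 {n d s : ℕ} (ρ : Matrix (Fin n) (Fin n) ℂ)
    (D : Fin d → Matrix (Fin n) (Fin n) ℂ)
    (hρ : ρ.PosSemidef) (hρtr : ρ.trace = 1)
    (hD : ∀ i, (D i).IsHermitian)
    (hdeg : ∀ Z : Matrix (Fin n) (Fin n) ℂ, Z.PosSemidef → ((ρ * Z).trace).re = 0 →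
      ∀ i, ((D i * Z).trace).re = 0)
    (M : Fin s → Matrix (Fin n) (Fin n) ℂ)
    (hM : ∀ x, (M x).PosSemidef) (hMsum : ∑ x, M x = 1)
    (k : Fin s → ℕ)
    (N : (x : Fin s) → Fin (k x) → Matrix (Fin n) (Fin n) ℂ)
    (hNpos : ∀ x j, (N x j).PosSemidef)
    (hNdec : ∀ x, M x = ∑ j, N x j) :
    (∑ x, ∑ j, N x j = 1) ∧
    ((∑ x, ∑ j, gMat ρ D (N x j)) - ∑ x, gMat ρ D (M x)).PosSemidef := by
  constructor
  · simp_rw [← hNdec]; exact hMsum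
  · -- reduce to per-x subadditivity
    have key : ∀ x, ((∑ j, gMat ρ D (N x j)) - gMat ρ D (M x)).PosSemidef := by
      intro x
      refine Matrix.PosSemidef.of_dotProduct_mulVec_nonneg ?_ ?_
      · exact Matrix.IsHermitian.sub
          (isHermitian_finsum _ _ (fun j _ => gMat_isHermitian ρ D (N x j)))
          (gMat_isHermitian ρ D (M x))
      · intro v
        simp only [star_trivial, Matrix.sub_mulVec, dotProduct_sub, sub_nonneg]
        -- quadratic forms
        set t : Fin (k x) → ℝ := fun j => ((ρ * N x j).trace).re with ht
        set b : Fin (k x) → ℝ := fun j => ∑ i, v i * ((D i * N x j).trace).re with hb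
        have htnn : ∀ j, 0 ≤ t j := fun j => trace_mul_psd_re_nonneg hρ (hNpos x j)
        have hbz : ∀ j, t j = 0 → b j = 0 := by
          intro j hj
          simp only [hb]
          refine Finset.sum_eq_zero fun i _ => ?_
          rw [hdeg (N x j) (hNpos x j) hj i, mul_zero]
        -- linearity of traces
        have htr : ∀ A : Matrix (Fin n) (Fin n) ℂ,
            ((A * M x).trace).re = ∑ j, ((A * N x j).trace).re := by
          intro A
          rw [hNdec x, Finset.mul_sum, Matrix.trace_sum, Complex.re_sum]
        have hS : ((ρ * M x).trace).re = ∑ j, t j := htr ρ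
        have hB : (∑ i, v i * ((D i * M x).trace).re) = ∑ j, b j := by
          simp_rw [hb]
          rw [Finset.sum_comm]
          refine Finset.sum_congr rfl fun i _ => ?_
          rw [htr (D i), Finset.mul_sum]
        -- quadratic forms via gMat_quad
        have hsum : v ⬝ᵥ (∑ j, gMat ρ D (N x j)) *ᵥ v
            = ∑ j, (if t j = 0 then 0 else (b j) ^ 2 / t j) := by
          rw [sum_mulVec', dotProduct_sum']
          exact Finset.sum_congr rfl fun j _ => gMat_quad ρ D (N x j) v
        rw [hsum, gMat_quad]
        split
        · -- tr(ρ M x) = 0 case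
          refine Finset.sum_nonneg fun j _ => ?_
          split
          · exact le_refl 0
          · exact div_nonneg (sq_nonneg _) (htnn j)
        · rename_i hSne
          -- Cauchy-Schwarz
          have hSpos : 0 < ((ρ * M x).trace).re :=
            lt_of_le_of_ne (trace_mul_psd_re_nonneg hρ (hM x)) (Ne.symm hSne)
          set s' : Finset (Fin (k x)) := Finset.univ.filter (fun j => t j ≠ 0) with hs'
          have hb_eq : ∑ j ∈ s', b j = ∑ j, b j :=
            Finset.sum_filter_of_ne fun j _ hbj => fun htj => hbj (hbz j htj)
          have ht_eq : ∑ j ∈ s', t j = ∑ j, t j :=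
            Finset.sum_filter_of_ne fun j _ htj => htj
          have hQ_eq : ∑ j ∈ s', (if t j = 0 then 0 else (b j) ^ 2 / t j)
              = ∑ j, (if t j = 0 then 0 else (b j) ^ 2 / t j) := by
            refine Finset.sum_filter_of_ne fun j _ hQj => ?_
            intro htj
            exact hQj (by simp [htj])
          have hcs := Finset.sq_sum_div_le_sum_sq_div s' b
            (fun j hj => lt_of_le_of_ne (htnn j)
              (Ne.symm (Finset.mem_filter.mp hj).2))
          calc (∑ i, v i * ((D i * M x).trace).re) ^ 2 / ((ρ * M x).trace).re
              = (∑ j ∈ s', b j) ^ 2 / (∑ j ∈ s', t j) := by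
                rw [hb_eq, ht_eq, hB, hS]
            _ ≤ ∑ j ∈ s', (b j) ^ 2 / t j := hcs
            _ = ∑ j ∈ s', (if t j = 0 then 0 else (b j) ^ 2 / t j) := by
                refine Finset.sum_congr rfl fun j hj => ?_
                rw [if_neg (Finset.mem_filter.mp hj).2]
            _ = ∑ j, (if t j = 0 then 0 else (b j) ^ 2 / t j) := hQ_eq
    -- sum of PSD matrices is PSD
    have : (∑ x, ((∑ j, gMat ρ D (N x j)) - gMat ρ D (M x))).PosSemidef := by
      refine Finset.sum_induction _ _ (fun a b ha hb => ha.add hb)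
        Matrix.PosSemidef.zero (fun x _ => key x)
    rwa [Finset.sum_sub_distrib] at this
end
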